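/- Let H be a real inner product space, φ : H → ℝ bounded below on a nonempty set C ⊆ H, and t, u > 0 with t < u. Suppose φ is (1/u)-semiconvex. Then the inf-convolution ψ(x) = inf_{z ∈ C} [φ(z) + (1/(2t))‖x - z‖²], assumed finite and with the infimum restricted to a convex set C, is (1/(u-t))-semiconvex. -/

import Mathlib

set_option maxHeartbeats 1000000

theorem inf_convolution_semiconvex {H : Type*} [NormedAddCommGroup H]
    [InnerProductSpace ℝ H] (t u : ℝ) (ht : 0 < t) (htu : t < u)
    (φ : H → ℝ) (C : Set H) (hne : C.Nonempty) (hconv : Convex ℝ C)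
    (hbdd : BddBelow (φ '' C))
    (hsc : ConvexOn ℝ Set.univ (fun x => φ x + 1 / (2 * u) * ‖x‖ ^ 2))
    (ψ : H → ℝ)
    (hψ : ∀ x : H, IsGLB ((fun z => φ z + 1 / (2 * t) * ‖x - z‖ ^ 2) '' C) (ψ x)) :
    ConvexOn ℝ Set.univ (fun x => ψ x + 1 / (2 * (u - t)) * ‖x‖ ^ 2) := by
  have hut : (0:ℝ) < u - t := by linarith
  have hu : (0:ℝ) < u := by linarith
  set α : ℝ := (u - t) / (t * u) with hα
  have hαpos : 0 < α := div_pos hut (by positivity)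
  set s : ℝ := u / (u - t) with hs
  -- key algebraic identity
  have key : ∀ x z : H, φ z + 1 / (2 * t) * ‖x - z‖ ^ 2 + 1 / (2 * (u - t)) * ‖x‖ ^ 2
      = (φ z + 1 / (2 * u) * ‖z‖ ^ 2) + α / 2 * ‖z - s • x‖ ^ 2 := by
    intro x z
    have h1 : ‖x - z‖ ^ 2 = ‖x‖ ^ 2 - 2 * inner ℝ x z + ‖z‖ ^ 2 := by
      rw [norm_sub_sq_real]
    have h2 : ‖z - s • x‖ ^ 2 = ‖z‖ ^ 2 - 2 * (s * inner ℝ x z) + s ^ 2 * ‖x‖ ^ 2 := by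
      rw [norm_sub_sq_real, real_inner_smul_right, real_inner_comm, norm_smul,
        Real.norm_eq_abs, mul_pow, sq_abs]
    rw [h1, h2, hα, hs]
    field_simp
    ring
  -- convexity of squared norm
  have nsq : ∀ (v w : H) (a b : ℝ), 0 ≤ a → 0 ≤ b → a + b = 1 →
      ‖a • v + b • w‖ ^ 2 ≤ a * ‖v‖ ^ 2 + b * ‖w‖ ^ 2 := by
    intro v w a b ha hb hab
    have h1 : ‖a • v + b • w‖ ≤ a * ‖v‖ + b * ‖w‖ := by
      calc ‖a • v + b • w‖ ≤ ‖a • v‖ + ‖b • w‖ := norm_add_le _ _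
        _ = a * ‖v‖ + b * ‖w‖ := by
            rw [norm_smul, norm_smul, Real.norm_eq_abs, Real.norm_eq_abs,
              abs_of_nonneg ha, abs_of_nonneg hb]
    nlinarith [norm_nonneg (a • v + b • w), norm_nonneg v, norm_nonneg w,
      sq_nonneg (‖v‖ - ‖w‖), mul_nonneg ha hb]
  refine ⟨convex_univ, ?_⟩
  intro x₀ _ x₁ _ a b ha hb hab
  refine le_of_forall_pos_le_add ?_
  intro ε hε
  -- near minimizers
  obtain ⟨y₀, hy₀mem, _, hy₀lt⟩ := (hψ x₀).exists_between (by linarith : ψ x₀ < ψ x₀ + ε)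
  obtain ⟨y₁, hy₁mem, _, hy₁lt⟩ := (hψ x₁).exists_between (by linarith : ψ x₁ < ψ x₁ + ε)
  obtain ⟨z₀, hz₀C, hz₀⟩ := hy₀mem
  obtain ⟨z₁, hz₁C, hz₁⟩ := hy₁mem
  have hz₀lt : φ z₀ + 1 / (2 * t) * ‖x₀ - z₀‖ ^ 2 < ψ x₀ + ε := hz₀.trans_lt hy₀lt
  have hz₁lt : φ z₁ + 1 / (2 * t) * ‖x₁ - z₁‖ ^ 2 < ψ x₁ + ε := hz₁.trans_lt hy₁lt
  set xl := a • x₀ + b • x₁ with hxl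
  set zl := a • z₀ + b • z₁ with hzl
  have hzlC : zl ∈ C := hconv hz₀C hz₁C ha hb hab
  clear_value α s
  -- ψ xl ≤ value at zl
  have hψle : ψ xl ≤ φ zl + 1 / (2 * t) * ‖xl - zl‖ ^ 2 :=
    (hψ xl).1 ⟨zl, hzlC, rfl⟩
  -- joint convexity via key identity
  have hGconv := hsc.2 (Set.mem_univ z₀) (Set.mem_univ z₁) ha hb hab
  simp only [smul_eq_mul] at hGconv
  have hvec : zl - s • xl = a • (z₀ - s • x₀) + b • (z₁ - s • x₁) := by
    rw [hxl, hzl]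
    simp only [smul_sub, smul_smul, smul_add]
    module
  have hnorm : ‖zl - s • xl‖ ^ 2 ≤ a * ‖z₀ - s • x₀‖ ^ 2 + b * ‖z₁ - s • x₁‖ ^ 2 := by
    rw [hvec]; exact nsq _ _ a b ha hb hab
  have hjoint : φ zl + 1 / (2 * t) * ‖xl - zl‖ ^ 2 + 1 / (2 * (u - t)) * ‖xl‖ ^ 2
      ≤ a * (φ z₀ + 1 / (2 * t) * ‖x₀ - z₀‖ ^ 2 + 1 / (2 * (u - t)) * ‖x₀‖ ^ 2)
        + b * (φ z₁ + 1 / (2 * t) * ‖x₁ - z₁‖ ^ 2 + 1 / (2 * (u - t)) * ‖x₁‖ ^ 2) := by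
    rw [key xl zl, key x₀ z₀, key x₁ z₁]
    have h2 : α / 2 * ‖zl - s • xl‖ ^ 2
        ≤ a * (α / 2 * ‖z₀ - s • x₀‖ ^ 2) + b * (α / 2 * ‖z₁ - s • x₁‖ ^ 2) := by
      nlinarith [hnorm, hαpos.le]
    nlinarith [hGconv, h2]
  have ha' : a * (φ z₀ + 1 / (2 * t) * ‖x₀ - z₀‖ ^ 2) ≤ a * (ψ x₀ + ε) :=
    mul_le_mul_of_nonneg_left hz₀lt.le ha
  have hb' : b * (φ z₁ + 1 / (2 * t) * ‖x₁ - z₁‖ ^ 2) ≤ b * (ψ x₁ + ε) :=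
    mul_le_mul_of_nonneg_left hz₁lt.le hb
  have hab' : a * ε + b * ε = ε := by rw [← add_mul, hab, one_mul]
  simp only [smul_eq_mul]
  nlinarith [hjoint, hψle, ha', hb']
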